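/- arXiv:1703.08257 — 2 statements merged into one kernel-verified Lean document; each statement's English description precedes it below -/
import Mathlib

section
/- Let G = (V,E) be a finite connected graph with at least 2 vertices, maximum degree Δ(G), and edge isoperimetric (Cheeger) constant ι(G) = min over nonempty S ⊆ V with |S| ≤ |V|/2 of |E(S,S^c)|/|S|, where E(S,S^c) is the set of edges with exactly one endpoint in S. Then the diameter of G satisfies diam(G) ≤ (4·Δ(G)/ι(G))·ln|V|. -/
open Finset

section Aux
variable {V : Type*} [Fintype V] [DecidableEq V] (G : SimpleGraph V) [DecidableRel G.Adj]

omit [Fintype V] [DecidableRel G.Adj] in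
lemma cross_of_walk {S : Finset V} : ∀ {a b : V}, G.Walk a b → a ∈ S → b ∉ S →
    ∃ x y, x ∈ S ∧ y ∉ S ∧ G.Adj x y := by
  intro a b w
  induction w with
  | nil => intro h1 h2; exact absurd h1 h2
  | @cons a c b h p ih =>
    intro ha hb
    by_cases hc : c ∈ S
    · exact ih hc hb
    · exact ⟨_, _, ha, hc, h⟩

/-- the cut of a nonempty proper set is nonempty -/
lemma one_le_cut (hconn : G.Connected) {S : Finset V} (hS : S.Nonempty)
    (hS2 : ∃ b, b ∉ S) :
    1 ≤ (Finset.univ.filter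
        (fun p : V × V => p.1 ∈ S ∧ p.2 ∉ S ∧ G.Adj p.1 p.2)).card := by
  obtain ⟨a, ha⟩ := hS
  obtain ⟨b, hb⟩ := hS2
  obtain ⟨w⟩ := hconn a b
  obtain ⟨x, y, hx, hy, hxy⟩ := cross_of_walk G w ha hb
  have : (x, y) ∈ Finset.univ.filter
      (fun p : V × V => p.1 ∈ S ∧ p.2 ∉ S ∧ G.Adj p.1 p.2) := by
    simp [hx, hy, hxy]
  exact Finset.card_pos.mpr ⟨_, this⟩

lemma maxDegree_pos (hconn : G.Connected) (hcard : 1 < Fintype.card V) :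
    0 < G.maxDegree := by
  obtain ⟨u, v, huv⟩ := Fintype.exists_pair_of_one_lt_card hcard
  obtain ⟨w⟩ := hconn u v
  cases w with
  | nil => exact absurd rfl huv
  | cons h p =>
    calc 0 < G.degree u := (G.degree_pos_iff_exists_adj u).mpr ⟨_, h⟩
    _ ≤ G.maxDegree := G.degree_le_maxDegree u

end Aux

section Iota
set_option linter.unusedSectionVars false
variable {V : Type*} [Fintype V] [DecidableEq V] (G : SimpleGraph V) [DecidableRel G.Adj]

def cutCard (S : Finset V) : ℕ :=
  (Finset.univ.filter (fun p : V × V => p.1 ∈ S ∧ p.2 ∉ S ∧ G.Adj p.1 p.2)).card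

def cheegerSet : Set ℝ :=
  {x : ℝ | ∃ S : Finset V, S.Nonempty ∧ 2 * S.card ≤ Fintype.card V ∧
      x = (cutCard G S : ℝ) / S.card}

lemma cheegerSet_nonempty (hcard : 1 < Fintype.card V) : (cheegerSet G).Nonempty := by
  have : Nonempty V := Fintype.card_pos_iff.mp (by omega)
  obtain ⟨v⟩ := this
  exact ⟨_, ⟨{v}, Finset.singleton_nonempty v, by simp only [Finset.card_singleton]; omega, rfl⟩⟩

lemma cheegerSet_bddBelow : BddBelow (cheegerSet G) := by
  refine ⟨0, fun x hx => ?_⟩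
  obtain ⟨S, _, _, rfl⟩ := hx
  positivity

lemma cutCard_singleton (v : V) : cutCard G {v} = G.degree v := by
  rw [cutCard, ← SimpleGraph.card_neighborFinset_eq_degree]
  have : (Finset.univ.filter (fun p : V × V => p.1 ∈ ({v} : Finset V) ∧
      p.2 ∉ ({v} : Finset V) ∧ G.Adj p.1 p.2)) = {v} ×ˢ G.neighborFinset v := by
    ext ⟨a, b⟩
    simp only [Finset.mem_filter, Finset.mem_univ, true_and, Finset.mem_singleton,
      Finset.mem_product, SimpleGraph.mem_neighborFinset]
    constructor
    · rintro ⟨rfl, _, h⟩; exact ⟨rfl, h⟩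
    · rintro ⟨rfl, h⟩; exact ⟨rfl, fun hb => G.ne_of_adj h hb.symm, h⟩
  rw [this, Finset.card_product, Finset.card_singleton, one_mul]

lemma iota_le_maxDegree (hcard : 1 < Fintype.card V) :
    sInf (cheegerSet G) ≤ G.maxDegree := by
  have : Nonempty V := Fintype.card_pos_iff.mp (by omega)
  obtain ⟨v⟩ := this
  have hmem : ((cutCard G {v} : ℝ) / ({v} : Finset V).card) ∈ cheegerSet G :=
    ⟨{v}, Finset.singleton_nonempty v, by simp only [Finset.card_singleton]; omega, rfl⟩
  calc sInf (cheegerSet G) ≤ _ := csInf_le (cheegerSet_bddBelow G) hmem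
    _ ≤ (G.maxDegree : ℝ) := by
        simp only [Finset.card_singleton, Nat.cast_one, div_one, cutCard_singleton]
        exact_mod_cast G.degree_le_maxDegree v

lemma iota_pos (hconn : G.Connected) (hcard : 1 < Fintype.card V) :
    0 < sInf (cheegerSet G) := by
  have h : (1 : ℝ) / Fintype.card V ≤ sInf (cheegerSet G) := by
    apply le_csInf (cheegerSet_nonempty G hcard)
    rintro x ⟨S, hS, hS2, rfl⟩
    have hb : ∃ b, b ∉ S := by
      by_contra h
      push_neg at h
      have : S = Finset.univ := Finset.eq_univ_iff_forall.mpr h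
      rw [this] at hS2
      simp at hS2; omega
    have h1 : 1 ≤ cutCard G S := one_le_cut G hconn hS hb
    have h2 : S.card ≤ Fintype.card V := Finset.card_le_univ S
    have h3 : 0 < S.card := Finset.card_pos.mpr hS
    apply div_le_div₀ (by positivity) (by exact_mod_cast h1) (by exact_mod_cast h3)
      (by exact_mod_cast h2)
  have : (0:ℝ) < 1 / Fintype.card V := by positivity
  linarith

lemma iota_mul_le_cut (hcard : 1 < Fintype.card V) {S : Finset V} (hS : S.Nonempty)
    (hS2 : 2 * S.card ≤ Fintype.card V) :
    sInf (cheegerSet G) * S.card ≤ (cutCard G S : ℝ) := by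
  have h := csInf_le (cheegerSet_bddBelow G) ⟨S, hS, hS2, rfl⟩
  have h3 : (0:ℝ) < S.card := by exact_mod_cast Finset.card_pos.mpr hS
  calc sInf (cheegerSet G) * S.card ≤ (cutCard G S : ℝ) / S.card * S.card := by
        exact mul_le_mul_of_nonneg_right h h3.le
    _ = _ := by field_simp

end Iota

section Ball
set_option linter.unusedSectionVars false
variable {V : Type*} [Fintype V] [DecidableEq V] (G : SimpleGraph V) [DecidableRel G.Adj]

noncomputable def gball (u : V) (k : ℕ) : Finset V := Finset.univ.filter (fun w => G.dist u w ≤ k)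

lemma mem_gball_self (u : V) (k : ℕ) : u ∈ gball G u k := by
  simp [gball, SimpleGraph.dist_self]

lemma gball_mono (u : V) (k : ℕ) : gball G u k ⊆ gball G u (k + 1) := by
  intro w hw
  simp only [gball, Finset.mem_filter, Finset.mem_univ, true_and] at hw ⊢
  omega

lemma gball_zero (hconn : G.Connected) (u : V) : gball G u 0 = {u} := by
  ext w
  simp only [gball, Finset.mem_filter, Finset.mem_univ, true_and, Nat.le_zero,
    Finset.mem_singleton]
  rw [hconn.dist_eq_zero_iff]
  exact eq_comm

lemma cut_gball_le (hconn : G.Connected) (u : V) (k : ℕ) :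
    cutCard G (gball G u k) ≤ G.maxDegree * (gball G u (k+1) \ gball G u k).card := by
  apply Finset.card_le_mul_card_image_of_maps_to (f := Prod.snd)
  · rintro ⟨a, b⟩ hab
    simp only [Finset.mem_filter, Finset.mem_univ, true_and] at hab
    obtain ⟨ha, hb, hadj⟩ := hab
    simp only [Finset.mem_sdiff]
    refine ⟨?_, hb⟩
    simp only [gball, Finset.mem_filter, Finset.mem_univ, true_and] at ha ⊢
    calc G.dist u b ≤ G.dist u a + G.dist a b := hconn.dist_triangle
      _ ≤ k + 1 := by
          have : G.dist a b = 1 := SimpleGraph.dist_eq_one_iff_adj.mpr hadj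
          omega
  · intro b hb
    trans (G.neighborFinset b).card
    · apply Finset.card_le_card_of_injOn Prod.fst
      · rintro ⟨x, y⟩ hxy
        simp only [Finset.mem_coe, Finset.mem_filter, Finset.mem_univ, true_and] at hxy
        obtain ⟨⟨_, _, hadj⟩, rfl⟩ := hxy
        simpa [SimpleGraph.mem_neighborFinset] using hadj.symm
      · rintro ⟨x1, y1⟩ h1 ⟨x2, y2⟩ h2 h
        simp only [Finset.mem_coe, Finset.mem_filter] at h1 h2
        simp only at h
        simp [h, h1.2, h2.2]
    · rw [G.card_neighborFinset_eq_degree]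
      exact G.degree_le_maxDegree b

lemma gball_growth (hconn : G.Connected) (hcard : 1 < Fintype.card V) (u : V) (k : ℕ)
    (h : 2 * (gball G u k).card ≤ Fintype.card V) :
    (1 + sInf (cheegerSet G) / G.maxDegree) * (gball G u k).card
      ≤ ((gball G u (k+1)).card : ℝ) := by
  set ι := sInf (cheegerSet G)
  have hΔ : (0:ℝ) < G.maxDegree := by exact_mod_cast maxDegree_pos G hconn hcard
  have h1 : ι * (gball G u k).card ≤ (cutCard G (gball G u k) : ℝ) :=
    iota_mul_le_cut G hcard ⟨u, mem_gball_self G u k⟩ h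
  have h2 : (cutCard G (gball G u k) : ℝ)
      ≤ G.maxDegree * ((gball G u (k+1)).card - (gball G u k).card) := by
    have := cut_gball_le G hconn u k
    have hc : ((gball G u (k+1) \ gball G u k).card : ℝ)
        = (gball G u (k+1)).card - (gball G u k).card := by
      rw [Finset.card_sdiff_of_subset (gball_mono G u k)]
      have := Finset.card_le_card (gball_mono G u k)
      push_cast [Nat.cast_sub this]
      ring
    calc (cutCard G (gball G u k) : ℝ)
        ≤ (G.maxDegree : ℝ) * ((gball G u (k+1) \ gball G u k).card : ℝ) := by
          exact_mod_cast this
      _ = _ := by rw [hc]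
  have key : ι / G.maxDegree * (gball G u k).card
      ≤ ((gball G u (k+1)).card : ℝ) - (gball G u k).card := by
    rw [div_mul_eq_mul_div, div_le_iff₀ hΔ]
    nlinarith
  nlinarith

end Ball

section Radius
set_option linter.unusedSectionVars false
variable {V : Type*} [Fintype V] [DecidableEq V] (G : SimpleGraph V) [DecidableRel G.Adj]

lemma gball_pow_le (hconn : G.Connected) (hcard : 1 < Fintype.card V) (u : V) :
    ∀ k : ℕ, (∀ j < k, 2 * (gball G u j).card ≤ Fintype.card V) →
      (1 + sInf (cheegerSet G) / G.maxDegree) ^ k ≤ ((gball G u k).card : ℝ) := by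
  intro k
  induction k with
  | zero =>
    intro _
    simp only [pow_zero, gball_zero G hconn, Finset.card_singleton, Nat.cast_one, le_refl]
  | succ k ih =>
    intro h
    have hk := ih (fun j hj => h j (by omega))
    have hgrow := gball_growth G hconn hcard u k (h k (by omega))
    have hpos : (0:ℝ) < 1 + sInf (cheegerSet G) / G.maxDegree := by
      have hι := iota_pos G hconn hcard
      have hΔ : (0:ℝ) < G.maxDegree := by exact_mod_cast maxDegree_pos G hconn hcard
      positivity
    calc (1 + sInf (cheegerSet G) / G.maxDegree) ^ (k+1)
        = (1 + sInf (cheegerSet G) / G.maxDegree)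
          * (1 + sInf (cheegerSet G) / G.maxDegree) ^ k := by ring
      _ ≤ (1 + sInf (cheegerSet G) / G.maxDegree) * (gball G u k).card := by
          exact mul_le_mul_of_nonneg_left hk hpos.le
      _ ≤ _ := hgrow

/-- there is a radius `r` at which the ball exceeds half the vertices, with
`r ≤ 1 + (2Δ/ι)(log n - log 2)`. -/
lemma exists_big_ball (hconn : G.Connected) (hcard : 1 < Fintype.card V) (u : V) :
    ∃ r : ℕ, Fintype.card V < 2 * (gball G u r).card ∧
      (r : ℝ) ≤ 1 + 2 * G.maxDegree / sInf (cheegerSet G)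
        * (Real.log (Fintype.card V) - Real.log 2) := by
  set ι := sInf (cheegerSet G) with hι
  set c := ι / G.maxDegree with hc
  have hιpos := iota_pos G hconn hcard
  have hΔ : (0:ℝ) < G.maxDegree := by exact_mod_cast maxDegree_pos G hconn hcard
  have hcpos : 0 < c := by positivity
  have hc1 : c ≤ 1 := by
    rw [hc, div_le_one hΔ]
    exact iota_le_maxDegree G hcard
  -- existence of some k with big ball
  have hex : ∃ k : ℕ, Fintype.card V < 2 * (gball G u k).card := by
    by_contra hcon
    push_neg at hcon
    obtain ⟨k, hk⟩ := pow_unbounded_of_one_lt (Fintype.card V : ℝ) (by linarith : (1:ℝ) < 1 + c)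
    have h1 : (1 + c) ^ k ≤ ((gball G u k).card : ℝ) :=
      gball_pow_le G hconn hcard u k (fun j _ => hcon j)
    have h2 : (gball G u k).card ≤ Fintype.card V := Finset.card_le_univ _
    have : ((gball G u k).card : ℝ) ≤ Fintype.card V := by exact_mod_cast h2
    linarith
  set r := Nat.find hex with hr
  have hspec : Fintype.card V < 2 * (gball G u r).card := Nat.find_spec hex
  have hmin : ∀ j < r, 2 * (gball G u j).card ≤ Fintype.card V := by
    intro j hj
    have := Nat.find_min hex hj
    omega
  refine ⟨r, hspec, ?_⟩
  have hr1 : 1 ≤ r := by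
    rcases Nat.eq_zero_or_pos r with h0 | h
    · exfalso
      have := hspec
      rw [h0, gball_zero G hconn] at this
      simp at this
      omega
    · exact h
  -- growth bound at r - 1
  have hgrow : (1 + c) ^ (r - 1) ≤ ((gball G u (r-1)).card : ℝ) :=
    gball_pow_le G hconn hcard u (r-1) (fun j hj => hmin j (by omega))
  have hhalf : 2 * ((gball G u (r-1)).card : ℝ) ≤ Fintype.card V := by
    exact_mod_cast hmin (r-1) (by omega)
  have hle : (1 + c) ^ (r - 1) ≤ (Fintype.card V : ℝ) / 2 := by linarith
  -- logs
  have hn0 : (0:ℝ) < Fintype.card V := by positivity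
  have hlog : ((r : ℝ) - 1) * Real.log (1 + c)
      ≤ Real.log (Fintype.card V) - Real.log 2 := by
    have h1 : Real.log ((1 + c) ^ (r-1)) ≤ Real.log ((Fintype.card V : ℝ) / 2) :=
      Real.log_le_log (by positivity) hle
    rw [Real.log_pow, Real.log_div (by positivity) (by norm_num)] at h1
    have : ((r - 1 : ℕ) : ℝ) = (r : ℝ) - 1 := by
      have : (1:ℕ) ≤ r := hr1
      push_cast [Nat.cast_sub this]
      ring
    rw [this] at h1
    exact h1
  -- log (1+c) ≥ c/2
  have hlogc : c / 2 ≤ Real.log (1 + c) := by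
    rw [Real.le_log_iff_exp_le (by linarith)]
    have h2 : 1 - c/2 ≤ Real.exp (-(c/2)) := by
      have := Real.add_one_le_exp (-(c/2))
      linarith
    have hpos2 : (0:ℝ) < 1 - c/2 := by linarith
    have h3 : Real.exp (c/2) ≤ (1 - c/2)⁻¹ := by
      have h5 := one_div_le_one_div_of_le hpos2 h2
      rwa [Real.exp_neg, one_div, inv_inv, one_div] at h5
    have h4 : (1 - c/2)⁻¹ ≤ 1 + c := by
      rw [inv_le_iff_one_le_mul₀ hpos2]
      nlinarith
    linarith
  -- combine
  have hstep : ((r:ℝ) - 1) * (c/2) ≤ Real.log (Fintype.card V) - Real.log 2 := by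
    have hrpos : (0:ℝ) ≤ (r:ℝ) - 1 := by
      have : (1:ℝ) ≤ r := by exact_mod_cast hr1
      linarith
    calc ((r:ℝ) - 1) * (c/2) ≤ ((r:ℝ) - 1) * Real.log (1 + c) :=
          mul_le_mul_of_nonneg_left hlogc hrpos
      _ ≤ _ := hlog
  have h2c : 2 * G.maxDegree / ι = 2 / c := by
    rw [hc]
    field_simp
  rw [h2c]
  have hfin : (r:ℝ) - 1 ≤ 2 / c * (Real.log (Fintype.card V) - Real.log 2) := by
    rw [div_mul_eq_mul_div, le_div_iff₀ hcpos]
    nlinarith [hstep]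
  linarith

end Radius



/-- For a finite connected simple graph `G` on at least two vertices, with maximum
degree `Δ(G)` and edge isoperimetric (Cheeger) constant
`ι(G) = min {|E(S,Sᶜ)|/|S| : ∅ ≠ S, |S| ≤ |V|/2}`, the diameter satisfies
`diam(G) ≤ (4·Δ(G)/ι(G))·ln |V|`. -/
theorem diam_le_of_cheeger {V : Type*} [Fintype V] [DecidableEq V]
    (G : SimpleGraph V) [DecidableRel G.Adj]
    (hconn : G.Connected) (hcard : 1 < Fintype.card V) (ι : ℝ)
    (hι : ι = sInf {x : ℝ | ∃ S : Finset V, S.Nonempty ∧ 2 * S.card ≤ Fintype.card V ∧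
      x = ((Finset.univ.filter
            (fun p : V × V => p.1 ∈ S ∧ p.2 ∉ S ∧ G.Adj p.1 p.2)).card : ℝ) / S.card}) :
    (G.diam : ℝ) ≤ 4 * G.maxDegree / ι * Real.log (Fintype.card V) := by
  have hι' : ι = sInf (cheegerSet G) := hι
  subst hι'
  set ι := sInf (cheegerSet G) with hι2
  have : Nonempty V := Fintype.card_pos_iff.mp (by omega)
  have hιpos := iota_pos G hconn hcard
  have hιle := iota_le_maxDegree G hcard
  have hΔ : (0:ℝ) < G.maxDegree := by exact_mod_cast maxDegree_pos G hconn hcard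
  obtain ⟨u, v, huv⟩ := SimpleGraph.exists_dist_eq_diam (G := G)
  obtain ⟨r, hr1, hr2⟩ := exists_big_ball G hconn hcard u
  obtain ⟨s, hs1, hs2⟩ := exists_big_ball G hconn hcard v
  -- the two balls intersect
  have hinter : ((gball G u r) ∩ (gball G v s)).Nonempty := by
    rw [← Finset.card_pos]
    have h1 := Finset.card_union_add_card_inter (gball G u r) (gball G v s)
    have h2 : (gball G u r ∪ gball G v s).card ≤ Fintype.card V := Finset.card_le_univ _
    omega
  obtain ⟨w, hw⟩ := hinter
  rw [Finset.mem_inter] at hw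
  have hwu : G.dist u w ≤ r := by
    have := hw.1; simpa [gball] using this
  have hwv : G.dist v w ≤ s := by
    have := hw.2; simpa [gball] using this
  -- diameter bound
  have hdiam : G.diam ≤ r + s := by
    rw [← huv]
    calc G.dist u v ≤ G.dist u w + G.dist w v := hconn.dist_triangle
      _ ≤ r + s := by
          have hcomm : G.dist w v = G.dist v w := SimpleGraph.dist_comm
          omega
  -- final arithmetic
  set L2 := Real.log 2 with hL2def
  set Ln := Real.log (Fintype.card V) with hLndef
  have hL2 : 0.6931471803 < L2 := Real.log_two_gt_d9
  have hLn : L2 ≤ Ln := by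
    apply Real.log_le_log (by norm_num)
    exact_mod_cast hcard
  have hD : 1 ≤ (G.maxDegree : ℝ) / ι := (one_le_div hιpos).mpr hιle
  have hdr : (G.diam : ℝ) ≤ (r : ℝ) + (s : ℝ) := by exact_mod_cast hdiam
  have h4 : 2 ≤ 4 * ((G.maxDegree : ℝ) / ι) * L2 := by nlinarith
  have hrw : 4 * (G.maxDegree : ℝ) / ι = 4 * ((G.maxDegree : ℝ) / ι) := by ring
  have hrw2 : 2 * (G.maxDegree : ℝ) / ι = 2 * ((G.maxDegree : ℝ) / ι) := by ring
  rw [hrw]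
  rw [hrw2] at hr2 hs2
  nlinarith [hr2, hs2]
end

section
/- Let P be a reversible irreducible Markov chain on a finite state space with stationary distribution π, second largest eigenvalue λ₁, and conductance h = min over S with π(S) ≤ 1/2 of Q(S,S^c)/π(S) where Q(u,v)=π(u)P(u,v). Then h²/2 ≤ 1 − λ₁ ≤ 2h. -/
set_option linter.unusedSectionVars false

namespace CheegerProof
open Matrix Finset
variable {V : Type*} [Fintype V] [DecidableEq V]


variable {V : Type*} [Fintype V] [DecidableEq V]

lemma pow_entry_nonneg (P : Matrix V V ℝ) (hP0 : ∀ u v, 0 ≤ P u v) :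
    ∀ t u v, 0 ≤ (P ^ t) u v := by
  intro t
  induction t with
  | zero => intro u v; simp [Matrix.one_apply]; positivity
  | succ t ih =>
    intro u v
    rw [pow_succ, Matrix.mul_apply]
    exact Finset.sum_nonneg fun w _ => mul_nonneg (ih u w) (hP0 w v)

lemma pow_row_sum (P : Matrix V V ℝ) (hP1 : ∀ u, ∑ v, P u v = 1) :
    ∀ t u, ∑ v, (P ^ t) u v = 1 := by
  intro t
  induction t with
  | zero => intro u; simp [Matrix.one_apply]
  | succ t ih =>
    intro u
    simp only [pow_succ, Matrix.mul_apply]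
    rw [Finset.sum_comm]
    have : ∀ w, ∑ v, (P ^ t) u w * P w v = (P ^ t) u w := by
      intro w; rw [← Finset.mul_sum, hP1, mul_one]
    calc ∑ w, ∑ v, (P ^ t) u w * P w v = ∑ w, (P ^ t) u w := by
          exact Finset.sum_congr rfl fun w _ => this w
      _ = 1 := ih u

lemma pow_mulVec_fixed (P : Matrix V V ℝ) (f : V → ℝ) (hf : P *ᵥ f = f) :
    ∀ t, (P ^ t) *ᵥ f = f := by
  intro t
  induction t with
  | zero => simp
  | succ t ih => rw [pow_succ, ← Matrix.mulVec_mulVec, hf, ih]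

/-- Maximum principle: a harmonic function of an irreducible chain is constant. -/
lemma harmonic_const (P : Matrix V V ℝ) (hP0 : ∀ u v, 0 ≤ P u v)
    (hP1 : ∀ u, ∑ v, P u v = 1) (hirr : ∀ u v, ∃ t : ℕ, 0 < (P ^ t) u v)
    (f : V → ℝ) (hf : P *ᵥ f = f) [Nonempty V] : ∀ u v, f u = f v := by
  obtain ⟨u₀, -, hmax⟩ := Finset.exists_max_image Finset.univ f ⟨Classical.arbitrary V, Finset.mem_univ _⟩
  have key : ∀ v, f v = f u₀ := by
    intro v
    obtain ⟨t, ht⟩ := hirr u₀ v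
    have hfix := congrFun (pow_mulVec_fixed P f hf t) u₀
    have hexp : (P ^ t *ᵥ f) u₀ = ∑ w, (P ^ t) u₀ w * f w := by
      simp [Matrix.mulVec, dotProduct]
    have hsum : ∑ w, (P ^ t) u₀ w * (f u₀ - f w) = 0 := by
      have h1 : ∑ w, (P ^ t) u₀ w * (f u₀ - f w)
          = (∑ w, (P ^ t) u₀ w) * f u₀ - ∑ w, (P ^ t) u₀ w * f w := by
        rw [Finset.sum_mul, ← Finset.sum_sub_distrib]; exact Finset.sum_congr rfl fun w _ => by ring
      rw [h1, pow_row_sum P hP1, ← hexp, hfix]; ring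
    have hterm : ∀ w ∈ Finset.univ, 0 ≤ (P ^ t) u₀ w * (f u₀ - f w) :=
      fun w _ => mul_nonneg (pow_entry_nonneg P hP0 t u₀ w)
        (sub_nonneg.2 (hmax w (Finset.mem_univ w)))
    have := (Finset.sum_eq_zero_iff_of_nonneg hterm).1 hsum v (Finset.mem_univ v)
    have h2 : f u₀ - f v = 0 := by
      rcases mul_eq_zero.1 this with h | h
      · exact absurd h (ne_of_gt ht)
      · exact h
    linarith
  intro u v; rw [key u, key v]

lemma eigen_mem_spectrum (P : Matrix V V ℝ) (μ : ℝ) (f : V → ℝ) (hf : f ≠ 0)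
    (heig : P *ᵥ f = μ • f) : μ ∈ spectrum ℝ P := by
  rw [spectrum.mem_iff]
  intro hunit
  rw [Matrix.isUnit_iff_isUnit_det] at hunit
  have hker : ∃ v ≠ 0, (algebraMap ℝ (Matrix V V ℝ) μ - P) *ᵥ v = 0 := by
    refine ⟨f, hf, ?_⟩
    rw [Matrix.sub_mulVec, heig]
    ext u
    simp [Matrix.algebraMap_matrix_apply, Matrix.mulVec, dotProduct, Finset.sum_ite_eq,
      Matrix.one_apply, apply_ite (· * f ·), mul_comm]
  rw [Matrix.exists_mulVec_eq_zero_iff] at hker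
  rw [hker] at hunit
  simpa using hunit

lemma spectrum_to_eigen (P : Matrix V V ℝ) (μ : ℝ) (hμ : μ ∈ spectrum ℝ P) :
    ∃ f : V → ℝ, f ≠ 0 ∧ P *ᵥ f = μ • f := by
  rw [spectrum.mem_iff] at hμ
  have hdet : (algebraMap ℝ (Matrix V V ℝ) μ - P).det = 0 := by
    by_contra hd
    exact hμ ((Matrix.isUnit_iff_isUnit_det _).2 (isUnit_iff_ne_zero.2 hd))
  obtain ⟨f, hf, hker⟩ := Matrix.exists_mulVec_eq_zero_iff.2 hdet
  refine ⟨f, hf, ?_⟩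
  rw [Matrix.sub_mulVec] at hker
  have : algebraMap ℝ (Matrix V V ℝ) μ *ᵥ f = μ • f := by
    ext u
    simp [Matrix.algebraMap_matrix_apply, Matrix.mulVec, dotProduct, Matrix.one_apply,
      apply_ite (· * f ·), Finset.sum_ite_eq, mul_comm]
  rw [this] at hker
  exact (sub_eq_zero.1 hker).symm




variable {V : Type*} [Fintype V] [DecidableEq V]

lemma mulVec_sum_apply (P : Matrix V V ℝ) (f : V → ℝ) (u : V) :
    (P *ᵥ f) u = ∑ v, P u v * f v := by
  simp [Matrix.mulVec, dotProduct]

/-- column sums of Q: ∑ u, π u * P u v = π v -/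
lemma col_sum (P : Matrix V V ℝ) (π : V → ℝ) (hP1 : ∀ u, ∑ v, P u v = 1)
    (hrev : ∀ u v, π u * P u v = π v * P v u) (v : V) :
    ∑ u, π u * P u v = π v := by
  simp_rw [fun u => hrev u v]
  rw [← Finset.mul_sum, hP1, mul_one]

/-- orthogonality of a non-1 eigenfunction to constants -/
lemma eig_orth (P : Matrix V V ℝ) (π : V → ℝ) (hP1 : ∀ u, ∑ v, P u v = 1)
    (hrev : ∀ u v, π u * P u v = π v * P v u) (μ : ℝ) (hμ : μ ≠ 1)
    (f : V → ℝ) (heig : P *ᵥ f = μ • f) : ∑ u, π u * f u = 0 := by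
  have key : ∑ u, π u * (P *ᵥ f) u = ∑ u, π u * f u := by
    calc ∑ u, π u * (P *ᵥ f) u = ∑ u, ∑ v, π u * P u v * f v := by
          simp_rw [mulVec_sum_apply, Finset.mul_sum, mul_assoc]
      _ = ∑ v, (∑ u, π u * P u v) * f v := by
          rw [Finset.sum_comm]; simp_rw [Finset.sum_mul]
      _ = ∑ v, π v * f v := by simp_rw [col_sum P π hP1 hrev]
  rw [heig] at key
  simp only [Pi.smul_apply, smul_eq_mul] at key
  have key2 : μ * ∑ u, π u * f u = ∑ u, π u * f u := by
    calc μ * ∑ u, π u * f u = ∑ u, π u * (μ * f u) := by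
          rw [Finset.mul_sum]; exact Finset.sum_congr rfl fun x _ => by ring
      _ = _ := key
  have h0 : (μ - 1) * ∑ u, π u * f u = 0 := by
    rw [sub_mul, one_mul, key2, sub_self]
  rcases mul_eq_zero.1 h0 with hc | hc
  · exact absurd (by linarith [sub_eq_zero.1 hc]) hμ
  · exact hc

/-- Dirichlet form identity -/
lemma dirichlet_identity (P : Matrix V V ℝ) (π : V → ℝ) (hP1 : ∀ u, ∑ v, P u v = 1)
    (hrev : ∀ u v, π u * P u v = π v * P v u) (f : V → ℝ) :
    (1 / 2) * ∑ u, ∑ v, π u * P u v * (f u - f v) ^ 2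
      = ∑ u, π u * f u * f u - ∑ u, π u * (P *ᵥ f) u * f u := by
  have e1 : ∑ u, ∑ v, π u * P u v * (f u)^2 = ∑ u, π u * f u * f u := by
    refine Finset.sum_congr rfl fun u _ => ?_
    rw [← Finset.sum_mul, ← Finset.mul_sum, hP1]; ring
  have e2 : ∑ u, ∑ v, π u * P u v * (f v)^2 = ∑ u, π u * f u * f u := by
    rw [Finset.sum_comm]
    refine Finset.sum_congr rfl fun v _ => ?_
    calc ∑ u, π u * P u v * (f v)^2 = (∑ u, π u * P u v) * (f v)^2 := by
          rw [Finset.sum_mul]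
      _ = π v * f v * f v := by rw [col_sum P π hP1 hrev]; ring
  have e3 : ∑ u, ∑ v, π u * P u v * (f u * f v) = ∑ u, π u * (P *ᵥ f) u * f u := by
    refine Finset.sum_congr rfl fun u _ => ?_
    rw [mulVec_sum_apply, Finset.mul_sum, Finset.sum_mul]
    exact Finset.sum_congr rfl fun v _ => by ring
  have expand : ∑ u, ∑ v, π u * P u v * (f u - f v) ^ 2
      = (∑ u, ∑ v, π u * P u v * (f u)^2) + (∑ u, ∑ v, π u * P u v * (f v)^2)
        - 2 * ∑ u, ∑ v, π u * P u v * (f u * f v) := by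
    calc ∑ u, ∑ v, π u * P u v * (f u - f v) ^ 2
        = ∑ u, ∑ v, (π u * P u v * (f u)^2 + π u * P u v * (f v)^2
            - 2 * (π u * P u v * (f u * f v))) := by
          exact Finset.sum_congr rfl fun u _ => Finset.sum_congr rfl fun v _ => by ring
      _ = _ := by
          simp only [Finset.sum_sub_distrib, Finset.sum_add_distrib, ← Finset.mul_sum]
  rw [expand, e1, e2, e3]; ring




variable {V : Type*} [Fintype V] [DecidableEq V] [Nonempty V]


lemma variational (P : Matrix V V ℝ) (π : V → ℝ)
    (hP0 : ∀ u v, 0 ≤ P u v) (hP1 : ∀ u, ∑ v, P u v = 1)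
    (hπ0 : ∀ u, 0 < π u)
    (hrev : ∀ u v, π u * P u v = π v * P v u)
    (hirr : ∀ u v, ∃ t : ℕ, 0 < (P ^ t) u v)
    (lam1 : ℝ)
    (htop : ∀ μ ∈ spectrum ℝ P, μ ≠ 1 → μ ≤ lam1)
    (g : V → ℝ) (hg : ∑ u, π u * g u = 0) :
    ∑ u, π u * (P *ᵥ g) u * g u ≤ lam1 * ∑ u, π u * g u * g u := by
  set s : V → ℝ := fun u => Real.sqrt (π u) with hs
  have hs0 : ∀ u, 0 < s u := fun u => Real.sqrt_pos.2 (hπ0 u)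
  have hs2 : ∀ u, s u * s u = π u := fun u => Real.mul_self_sqrt (hπ0 u).le
  set A : Matrix V V ℝ := Matrix.of fun u v => s u * P u v / s v with hAdef
  have hAsymm : ∀ u v, A u v = A v u := by
    intro u v
    show s u * P u v / s v = s v * P v u / s u
    rw [div_eq_div_iff (hs0 v).ne' (hs0 u).ne']
    calc s u * P u v * s u = π u * P u v := by rw [← hs2 u]; ring
      _ = π v * P v u := hrev u v
      _ = s v * P v u * s v := by rw [← hs2 v]; ring
  have hA : A.IsHermitian := by
    ext u v
    simp only [Matrix.conjTranspose_apply, star_trivial]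
    exact hAsymm v u
  set b := hA.eigenvectorBasis with hb
  set μ : V → ℝ := hA.eigenvalues with hμ
  -- pointwise formula for A *ᵥ
  have hAmul : ∀ (f : V → ℝ) (u : V), (A *ᵥ f) u = ∑ v, (s u * P u v / s v) * f v := by
    intro f u
    rw [mulVec_sum_apply]
    rfl
  -- eigenfunctions of P from eigenvectors of A
  have hPeig : ∀ j, P *ᵥ (fun u => b j u / s u) = μ j • (fun u => b j u / s u) := by
    intro j
    have hAj := hA.mulVec_eigenvectorBasis j
    ext u
    have h2 : (A *ᵥ ⇑(b j)) u = μ j * b j u := by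
      have := congrFun hAj u
      simpa using this
    have hAju : ∑ v, (s u * P u v / s v) * b j v = μ j * b j u :=
      (hAmul (⇑(b j)) u).symm.trans h2
    have hsum : ∑ v, (s u * P u v / s v) * b j v = s u * ∑ v, P u v * (b j v / s v) := by
      rw [Finset.mul_sum]
      exact Finset.sum_congr rfl fun v _ => by ring
    have hc : s u * ∑ v, P u v * (b j v / s v) = μ j * b j u := by rw [← hsum]; exact hAju
    simp only [Pi.smul_apply, smul_eq_mul]
    rw [mulVec_sum_apply]
    have hne := (hs0 u).ne'
    rw [show μ j * (b j u / s u) = (μ j * b j u) / s u by ring, eq_div_iff hne]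
    rw [mul_comm]
    exact hc
  have hμspec : ∀ j, μ j ∈ spectrum ℝ P := by
    intro j
    refine eigen_mem_spectrum P (μ j) (fun u => b j u / s u) ?_ (hPeig j)
    intro hzero
    have hbj : (b j : EuclideanSpace ℝ V) = 0 := by
      ext u
      have := congrFun hzero u
      simp only [Pi.zero_apply] at this ⊢
      have := div_eq_zero_iff.1 this
      rcases this with h | h
      · exact h
      · exact absurd h (hs0 u).ne'
    have := b.orthonormal.1 j
    rw [hbj] at this
    simp at this
  -- the vector x
  set x : EuclideanSpace ℝ V := (WithLp.equiv 2 (V → ℝ)).symm (fun u => s u * g u) with hx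
  have hxapp : ∀ u, x u = s u * g u := fun u => rfl
  have hinner : ∀ a c : EuclideanSpace ℝ V, (inner ℝ a c : ℝ) = ∑ u, a u * c u := by
    intro a c
    simp [PiLp.inner_apply, RCLike.inner_apply, conj_trivial]
    exact Finset.sum_congr rfl fun u _ => mul_comm _ _
  -- coefficient
  set coef : V → ℝ := fun j => (inner ℝ x (b j) : ℝ) with hcoef
  -- key: coefficient along eigenvalue-1 directions vanishes
  have hc1 : ∀ j, μ j = 1 → coef j = 0 := by
    intro j hj
    have hconst : ∀ u v, b j u / s u = b j v / s v := by
      have := hPeig j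
      rw [hj, one_smul] at this
      exact harmonic_const P hP0 hP1 hirr _ this
    obtain ⟨u₀⟩ := ‹Nonempty V›
    set c := b j u₀ / s u₀ with hcdef
    have hbj : ∀ u, b j u = c * s u := by
      intro u
      rw [hcdef, ← hconst u u₀, div_mul_cancel₀ _ (hs0 u).ne']
    have : coef j = c * ∑ u, π u * g u := by
      rw [hcoef]
      simp only [hinner]
      rw [Finset.mul_sum]
      refine Finset.sum_congr rfl fun u _ => ?_
      rw [hxapp, hbj u, ← hs2 u]
      ring
    rw [this, hg, mul_zero]
  -- A is self-adjoint for the euclidean inner product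
  have hadj : ∀ a c : V → ℝ, ∑ u, a u * (A *ᵥ c) u = ∑ u, (A *ᵥ a) u * c u := by
    intro a c
    simp only [mulVec_sum_apply]
    calc ∑ u, a u * ∑ v, A u v * c v = ∑ u, ∑ v, a u * (A u v * c v) := by
          simp_rw [Finset.mul_sum]
      _ = ∑ v, ∑ u, a u * (A u v * c v) := Finset.sum_comm
      _ = ∑ v, (∑ u, A v u * a u) * c v := by
          refine Finset.sum_congr rfl fun v _ => ?_
          rw [Finset.sum_mul]
          refine Finset.sum_congr rfl fun u _ => ?_
          rw [hAsymm v u]; ring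
  set xt : V → ℝ := fun u => s u * g u with hxt
  have hAxt : ∀ u, (A *ᵥ xt) u = s u * (P *ᵥ g) u := by
    intro u
    rw [mulVec_sum_apply, mulVec_sum_apply, Finset.mul_sum]
    refine Finset.sum_congr rfl fun v _ => ?_
    show s u * P u v / s v * (s v * g v) = s u * (P u v * g v)
    rw [div_eq_mul_inv,
      show s u * P u v * (s v)⁻¹ * (s v * g v) = s u * P u v * ((s v)⁻¹ * s v) * g v from by ring,
      inv_mul_cancel₀ (hs0 v).ne', mul_one, mul_assoc]
  set y : EuclideanSpace ℝ V := (WithLp.equiv 2 (V → ℝ)).symm (A *ᵥ xt) with hy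
  have hyapp : ∀ u, y u = (A *ᵥ xt) u := fun u => rfl
  -- inner products as sums
  have hxy : (inner ℝ x y : ℝ) = ∑ u, π u * (P *ᵥ g) u * g u := by
    rw [hinner]
    refine Finset.sum_congr rfl fun u _ => ?_
    rw [hxapp, hyapp, hAxt]
    rw [← hs2 u]; ring
  have hxxval : (inner ℝ x x : ℝ) = ∑ u, π u * g u * g u := by
    rw [hinner]
    refine Finset.sum_congr rfl fun u _ => ?_
    rw [hxapp, ← hs2 u]; ring
  -- spectral decomposition of the two inner products
  have hbjy : ∀ j, (inner ℝ (b j) y : ℝ) = μ j * coef j := by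
    intro j
    have h0 : (inner ℝ (b j) y : ℝ) = ∑ u, b j u * y u := hinner _ _
    have e1 : ∑ u, b j u * y u = ∑ u, b j u * (A *ᵥ xt) u :=
      Finset.sum_congr rfl fun u _ => by rw [hyapp]
    have eA : ∀ u, (A *ᵥ ⇑(b j)) u = μ j * b j u := fun u => by
      simpa using congrFun (hA.mulVec_eigenvectorBasis j) u
    have e2 : ∑ u, b j u * (A *ᵥ xt) u = ∑ u, (A *ᵥ ⇑(b j)) u * xt u := hadj _ _
    have e3 : ∑ u, (A *ᵥ ⇑(b j)) u * xt u = μ j * ∑ u, b j u * xt u := by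
      rw [Finset.mul_sum]
      exact Finset.sum_congr rfl fun u _ => by rw [eA u]; ring
    have e4 : μ j * ∑ u, b j u * xt u = μ j * coef j := by
      refine congrArg (μ j * ·) ?_
      have h5 : coef j = ∑ u, x u * b j u := hinner _ _
      rw [h5]
      refine Finset.sum_congr rfl fun u _ => ?_
      show b j u * (s u * g u) = x u * b j u
      rw [hxapp]
      ring
    exact h0.trans (((e1.trans e2).trans e3).trans e4)
  have hbjx : ∀ j, (inner ℝ (b j) x : ℝ) = coef j := fun j => real_inner_comm _ _
  have hdecomp1 : (inner ℝ x y : ℝ) = ∑ j, μ j * coef j ^ 2 := by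
    rw [← b.sum_inner_mul_inner x y]
    refine Finset.sum_congr rfl fun j _ => ?_
    rw [hbjy j]
    show coef j * (μ j * coef j) = μ j * coef j ^ 2
    ring
  have hdecomp2 : (inner ℝ x x : ℝ) = ∑ j, coef j ^ 2 := by
    rw [← b.sum_inner_mul_inner x x]
    refine Finset.sum_congr rfl fun j _ => ?_
    rw [hbjx j]
    show coef j * coef j = coef j ^ 2
    ring
  -- the bound
  have hbound : ∑ j, μ j * coef j ^ 2 ≤ lam1 * ∑ j, coef j ^ 2 := by
    rw [Finset.mul_sum]
    refine Finset.sum_le_sum fun j _ => ?_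
    by_cases hj : μ j = 1
    · rw [hc1 j hj, hj]
      simp
    · exact mul_le_mul_of_nonneg_right (htop (μ j) (hμspec j) hj) (sq_nonneg _)
  calc ∑ u, π u * (P *ᵥ g) u * g u = ∑ j, μ j * coef j ^ 2 := by rw [← hxy, hdecomp1]
    _ ≤ lam1 * ∑ j, coef j ^ 2 := hbound
    _ = lam1 * ∑ u, π u * g u * g u := by rw [← hdecomp2, hxxval]




variable {V : Type*} [Fintype V] [DecidableEq V]

/-- crossing sum for an indicator -/
lemma cross_sum (P : Matrix V V ℝ) (π : V → ℝ)
    (hrev : ∀ u v, π u * P u v = π v * P v u) (S : Finset V) :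
    ∑ u, ∑ v, π u * P u v * |(if u ∈ S then (1:ℝ) else 0) - (if v ∈ S then (1:ℝ) else 0)|
      = 2 * ∑ u ∈ S, ∑ v ∈ Sᶜ, π u * P u v := by
  set ind : V → ℝ := fun u => if u ∈ S then (1:ℝ) else 0 with hind
  have key : ∀ u, ∑ v, π u * P u v * |ind u - ind v|
      = (if u ∈ S then ∑ v ∈ Sᶜ, π u * P u v else ∑ v ∈ S, π u * P u v) := by
    intro u
    rw [← Finset.sum_add_sum_compl S (fun v => π u * P u v * |ind u - ind v|)]
    by_cases hu : u ∈ S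
    · simp only [hu, if_true]
      have h1 : ∑ v ∈ S, π u * P u v * |ind u - ind v| = 0 := by
        refine Finset.sum_eq_zero fun v hv => ?_
        have : ind u - ind v = 0 := by simp [hind, hu, hv]
        rw [this, abs_zero, mul_zero]
      have h2 : ∑ v ∈ Sᶜ, π u * P u v * |ind u - ind v| = ∑ v ∈ Sᶜ, π u * P u v := by
        refine Finset.sum_congr rfl fun v hv => ?_
        have hv' : v ∉ S := Finset.mem_compl.1 hv
        have : |ind u - ind v| = 1 := by simp [hind, hu, hv']
        rw [this, mul_one]
      rw [h1, h2, zero_add]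
    · simp only [hu, if_false]
      have h1 : ∑ v ∈ S, π u * P u v * |ind u - ind v| = ∑ v ∈ S, π u * P u v := by
        refine Finset.sum_congr rfl fun v hv => ?_
        have : |ind u - ind v| = 1 := by simp [hind, hu, hv]
        rw [this, mul_one]
      have h2 : ∑ v ∈ Sᶜ, π u * P u v * |ind u - ind v| = 0 := by
        refine Finset.sum_eq_zero fun v hv => ?_
        have hv' : v ∉ S := Finset.mem_compl.1 hv
        have : ind u - ind v = 0 := by simp [hind, hu, hv']
        rw [this, abs_zero, mul_zero]
      rw [h1, h2, add_zero]
  calc ∑ u, ∑ v, π u * P u v * |ind u - ind v|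
      = ∑ u, (if u ∈ S then ∑ v ∈ Sᶜ, π u * P u v else ∑ v ∈ S, π u * P u v) := by
        exact Finset.sum_congr rfl fun u _ => key u
    _ = ∑ u ∈ S, ∑ v ∈ Sᶜ, π u * P u v + ∑ u ∈ Sᶜ, ∑ v ∈ S, π u * P u v := by
        rw [← Finset.sum_add_sum_compl S]
        congr 1
        · exact Finset.sum_congr rfl fun u hu => by rw [if_pos hu]
        · exact Finset.sum_congr rfl fun u hu => by rw [if_neg (Finset.mem_compl.1 hu)]
    _ = 2 * ∑ u ∈ S, ∑ v ∈ Sᶜ, π u * P u v := by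
        have : ∑ u ∈ Sᶜ, ∑ v ∈ S, π u * P u v = ∑ u ∈ S, ∑ v ∈ Sᶜ, π u * P u v := by
          rw [Finset.sum_comm]
          refine Finset.sum_congr rfl fun u _ => Finset.sum_congr rfl fun v _ => hrev v u
        rw [this]; ring

/-- co-area lower bound, by induction on the support -/
lemma coarea (P : Matrix V V ℝ) (π : V → ℝ)
    (hP0 : ∀ u v, 0 ≤ P u v) (hπ0 : ∀ u, 0 < π u)
    (hrev : ∀ u v, π u * P u v = π v * P v u) (h : ℝ)
    (hineq : ∀ S : Finset V, S.Nonempty → (∑ u ∈ S, π u) ≤ 1 / 2 →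
      h * ∑ u ∈ S, π u ≤ ∑ u ∈ S, ∑ v ∈ Sᶜ, π u * P u v) :
    ∀ (n : ℕ) (φ : V → ℝ), (Finset.univ.filter (fun u => 0 < φ u)).card ≤ n →
      (∀ u, 0 ≤ φ u) → (∑ u ∈ Finset.univ.filter (fun u => 0 < φ u), π u) ≤ 1 / 2 →
      2 * h * ∑ u, π u * φ u ≤ ∑ u, ∑ v, π u * P u v * |φ u - φ v| := by
  intro n
  induction n with
  | zero =>
    intro φ hcard hφ0 _
    have hempty : Finset.univ.filter (fun u => 0 < φ u) = ∅ := Finset.card_eq_zero.1 (Nat.le_zero.1 hcard)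
    have hzero : ∀ u, φ u = 0 := by
      intro u
      by_contra hu
      have : u ∈ Finset.univ.filter (fun u => 0 < φ u) :=
        Finset.mem_filter.2 ⟨Finset.mem_univ u, lt_of_le_of_ne (hφ0 u) (Ne.symm hu)⟩
      rw [hempty] at this; exact absurd this (Finset.notMem_empty u)
    have : ∑ u, π u * φ u = 0 := Finset.sum_eq_zero fun u _ => by rw [hzero u, mul_zero]
    rw [this, mul_zero]
    exact Finset.sum_nonneg fun u _ => Finset.sum_nonneg fun v _ =>
      mul_nonneg (mul_nonneg (hπ0 u).le (hP0 u v)) (abs_nonneg _)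
  | succ n ih =>
    intro φ hcard hφ0 hmeas
    set S := Finset.univ.filter (fun u => 0 < φ u) with hS
    rcases Finset.eq_empty_or_nonempty S with hSe | hSne
    · refine ih φ ?_ hφ0 hmeas
      show S.card ≤ n
      rw [hSe]; simp
    · -- positive minimum m on S
      obtain ⟨u₁, hu₁S, hu₁min⟩ := Finset.exists_min_image S φ hSne
      set m := φ u₁ with hm
      have hm0 : 0 < m := (Finset.mem_filter.1 hu₁S).2
      have hφS : ∀ u ∈ S, m ≤ φ u := hu₁min
      have hφout : ∀ u, u ∉ S → φ u = 0 := by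
        intro u hu
        by_contra hne
        exact hu (Finset.mem_filter.2 ⟨Finset.mem_univ u,
          lt_of_le_of_ne (hφ0 u) (Ne.symm hne)⟩)
      set φ' : V → ℝ := fun u => max (φ u - m) 0 with hφ'
      have hφ'0 : ∀ u, 0 ≤ φ' u := fun u => le_max_right _ _
      have hφ'in : ∀ u ∈ S, φ' u = φ u - m := fun u hu => max_eq_left (by linarith [hφS u hu])
      have hφ'out : ∀ u, u ∉ S → φ' u = 0 := fun u hu => max_eq_right (by linarith [hφout u hu])
      have hsub : Finset.univ.filter (fun u => 0 < φ' u) ⊆ S.erase u₁ := by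
        intro u hu
        have hpos : 0 < φ' u := (Finset.mem_filter.1 hu).2
        have huS : u ∈ S := by
          by_contra hns
          rw [hφ'out u hns] at hpos; exact lt_irrefl 0 hpos
        refine Finset.mem_erase.2 ⟨?_, huS⟩
        intro heq
        rw [heq, hφ'in u₁ hu₁S, ← hm, sub_self] at hpos
        exact lt_irrefl 0 hpos
      have hcard' : (Finset.univ.filter (fun u => 0 < φ' u)).card ≤ n := by
        calc (Finset.univ.filter (fun u => 0 < φ' u)).card ≤ (S.erase u₁).card :=
              Finset.card_le_card hsub
          _ = S.card - 1 := Finset.card_erase_of_mem hu₁S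
          _ ≤ n := by omega
      set ind : V → ℝ := fun u => if u ∈ S then (1:ℝ) else 0 with hind
      have hsum_decomp : ∑ u, π u * φ u = ∑ u, π u * φ' u + m * ∑ u ∈ S, π u := by
        have hpt : ∀ u, π u * φ u = π u * φ' u + π u * (if u ∈ S then m else 0) := by
          intro u
          by_cases hu : u ∈ S
          · rw [if_pos hu, hφ'in u hu]; ring
          · rw [if_neg hu, hφ'out u hu, hφout u hu]; ring
        calc ∑ u, π u * φ u = ∑ u, (π u * φ' u + π u * (if u ∈ S then m else 0)) :=
              Finset.sum_congr rfl fun u _ => hpt u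
          _ = ∑ u, π u * φ' u + ∑ u, π u * (if u ∈ S then m else 0) :=
              Finset.sum_add_distrib
          _ = ∑ u, π u * φ' u + m * ∑ u ∈ S, π u := by
              congr 1
              calc ∑ u, π u * (if u ∈ S then m else 0)
                  = ∑ u, (if u ∈ S then π u * m else 0) := by
                    exact Finset.sum_congr rfl fun u _ => by
                      by_cases hu : u ∈ S <;> simp [hu]
                _ = ∑ u ∈ S, π u * m := by rw [Finset.sum_ite_mem, Finset.univ_inter]
                _ = m * ∑ u ∈ S, π u := by rw [← Finset.sum_mul, mul_comm]
      have habs : ∀ u v, |φ u - φ v| = |φ' u - φ' v| + m * |ind u - ind v| := by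
        intro u v
        by_cases hu : u ∈ S <;> by_cases hv : v ∈ S
        · rw [hφ'in u hu, hφ'in v hv]
          have : ind u - ind v = 0 := by simp [hind, hu, hv]
          rw [this, abs_zero, mul_zero, add_zero]
          congr 1; ring
        · rw [hφ'in u hu, hφ'out v hv, hφout v hv]
          have h1 : |ind u - ind v| = 1 := by simp [hind, hu, hv]
          rw [h1, mul_one, sub_zero, sub_zero,
            abs_of_nonneg (hφ0 u), abs_of_nonneg (by linarith [hφS u hu] : (0:ℝ) ≤ φ u - m)]
          ring
        · rw [hφ'out u hu, hφ'in v hv, hφout u hu]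
          have h1 : |ind u - ind v| = 1 := by simp [hind, hu, hv]
          rw [h1, mul_one, zero_sub, zero_sub, abs_neg, abs_neg,
            abs_of_nonneg (hφ0 v), abs_of_nonneg (by linarith [hφS v hv] : (0:ℝ) ≤ φ v - m)]
          ring
        · rw [hφ'out u hu, hφ'out v hv, hφout u hu, hφout v hv]
          have : ind u - ind v = 0 := by simp [hind, hu, hv]
          rw [this, abs_zero, mul_zero, add_zero]
      have hrhs : ∑ u, ∑ v, π u * P u v * |φ u - φ v|
          = ∑ u, ∑ v, π u * P u v * |φ' u - φ' v|
            + 2 * m * ∑ u ∈ S, ∑ v ∈ Sᶜ, π u * P u v := by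
        have hcs := cross_sum P π hrev S
        calc ∑ u, ∑ v, π u * P u v * |φ u - φ v|
            = ∑ u, ∑ v, (π u * P u v * |φ' u - φ' v|
                + m * (π u * P u v * |ind u - ind v|)) := by
              refine Finset.sum_congr rfl fun u _ => Finset.sum_congr rfl fun v _ => ?_
              rw [habs u v]; ring
          _ = ∑ u, ∑ v, π u * P u v * |φ' u - φ' v|
              + m * ∑ u, ∑ v, π u * P u v * |ind u - ind v| := by
              rw [Finset.mul_sum]
              rw [← Finset.sum_add_distrib]
              refine Finset.sum_congr rfl fun u _ => ?_
              rw [Finset.mul_sum, ← Finset.sum_add_distrib]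
          _ = _ := by rw [hcs]; ring
      have hQS : h * ∑ u ∈ S, π u ≤ ∑ u ∈ S, ∑ v ∈ Sᶜ, π u * P u v :=
        hineq S hSne hmeas
      have hsupp' : (∑ u ∈ Finset.univ.filter (fun u => 0 < φ' u), π u) ≤ 1 / 2 := by
        have h1 : Finset.univ.filter (fun u => 0 < φ' u) ⊆ S :=
          hsub.trans (Finset.erase_subset u₁ S)
        calc ∑ u ∈ Finset.univ.filter (fun u => 0 < φ' u), π u
            ≤ ∑ u ∈ S, π u :=
              Finset.sum_le_sum_of_subset_of_nonneg h1 fun u _ _ => (hπ0 u).le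
          _ ≤ 1 / 2 := hmeas
      have hIH := ih φ' hcard' hφ'0 hsupp'
      have e1 : 2 * h * ∑ u, π u * φ u
          = 2 * h * ∑ u, π u * φ' u + 2 * m * (h * ∑ u ∈ S, π u) := by
        rw [hsum_decomp]; ring
      have e2 : 2 * m * (h * ∑ u ∈ S, π u) ≤ 2 * m * ∑ u ∈ S, ∑ v ∈ Sᶜ, π u * P u v :=
        mul_le_mul_of_nonneg_left hQS (by linarith)
      calc 2 * h * ∑ u, π u * φ u
          = 2 * h * ∑ u, π u * φ' u + 2 * m * (h * ∑ u ∈ S, π u) := e1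
        _ ≤ ∑ u, ∑ v, π u * P u v * |φ' u - φ' v| + 2 * m * (h * ∑ u ∈ S, π u) := by
            linarith [hIH]
        _ ≤ ∑ u, ∑ v, π u * P u v * |φ' u - φ' v|
            + 2 * m * ∑ u ∈ S, ∑ v ∈ Sᶜ, π u * P u v := by linarith [e2]
        _ = ∑ u, ∑ v, π u * P u v * |φ u - φ v| := hrhs.symm


lemma hard_dir {V : Type*} [Fintype V] [DecidableEq V] [Nonempty V]
    (P : Matrix V V ℝ) (π : V → ℝ)
    (hP0 : ∀ u v, 0 ≤ P u v) (hP1 : ∀ u, ∑ v, P u v = 1)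
    (hπ0 : ∀ u, 0 < π u) (hπ1 : ∑ u, π u = 1)
    (hrev : ∀ u v, π u * P u v = π v * P v u)
    (lam1 : ℝ) (hmem : lam1 ∈ spectrum ℝ P) (hne : lam1 ≠ 1)
    (h : ℝ) (hh0 : 0 ≤ h)
    (hineq : ∀ S : Finset V, S.Nonempty → (∑ u ∈ S, π u) ≤ 1 / 2 →
      h * ∑ u ∈ S, π u ≤ ∑ u ∈ S, ∑ v ∈ Sᶜ, π u * P u v) :
    h ^ 2 / 2 ≤ 1 - lam1 ∧
      ∃ S : Finset V, S.Nonempty ∧ (∑ u ∈ S, π u) ≤ 1 / 2 := by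
  classical
  -- eigenfunction of lam1
  obtain ⟨f, hf0, hfeig⟩ := spectrum_to_eigen P lam1 hmem
  have horth : ∑ u, π u * f u = 0 := eig_orth P π hP1 hrev lam1 hne f hfeig
  -- both signs occur
  have hsigns : (∃ u, 0 < f u) ∧ (∃ u, f u < 0) := by
    constructor
    · by_contra hall
      push_neg at hall
      have hzero : ∀ u ∈ Finset.univ, π u * f u = 0 := by
        intro u _
        have := (Finset.sum_eq_zero_iff_of_nonpos (fun u _ =>
          mul_nonpos_of_nonneg_of_nonpos (hπ0 u).le (hall u))).1 horth
        exact this u (Finset.mem_univ u)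
      refine hf0 (funext fun u => ?_)
      have := hzero u (Finset.mem_univ u)
      rcases mul_eq_zero.1 this with hc | hc
      · exact absurd hc (hπ0 u).ne'
      · exact hc
    · by_contra hall
      push_neg at hall
      have hzero : ∀ u ∈ Finset.univ, π u * f u = 0 := by
        intro u _
        have := (Finset.sum_eq_zero_iff_of_nonneg (fun u _ =>
          mul_nonneg (hπ0 u).le (hall u))).1 horth
        exact this u (Finset.mem_univ u)
      refine hf0 (funext fun u => ?_)
      have := hzero u (Finset.mem_univ u)
      rcases mul_eq_zero.1 this with hc | hc
      · exact absurd hc (hπ0 u).ne'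
      · exact hc
  -- choose the sign so that the positive part has measure ≤ 1/2
  have hmeas_sum : (∑ u ∈ Finset.univ.filter (fun u => 0 < f u), π u)
      + (∑ u ∈ Finset.univ.filter (fun u => f u < 0), π u) ≤ 1 := by
    have hdisj : Disjoint (Finset.univ.filter (fun u => 0 < f u))
        (Finset.univ.filter (fun u => f u < 0)) := by
      rw [Finset.disjoint_left]
      intro u hu hu'
      exact absurd ((Finset.mem_filter.1 hu').2) (not_lt.2 (Finset.mem_filter.1 hu).2.le)
    rw [← Finset.sum_union hdisj]
    rw [← hπ1]
    exact Finset.sum_le_sum_of_subset_of_nonneg (Finset.subset_univ _)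
      fun u _ _ => (hπ0 u).le
  obtain ⟨F, hFeig, hFex, hFmeas⟩ : ∃ F : V → ℝ, P *ᵥ F = lam1 • F ∧ (∃ u, 0 < F u) ∧
      (∑ u ∈ Finset.univ.filter (fun u => 0 < F u), π u) ≤ 1 / 2 := by
    by_cases hc : (∑ u ∈ Finset.univ.filter (fun u => 0 < f u), π u) ≤ 1 / 2
    · exact ⟨f, hfeig, hsigns.1, hc⟩
    · refine ⟨-f, ?_, ?_, ?_⟩
      · rw [Matrix.mulVec_neg, hfeig, smul_neg]
      · obtain ⟨u, hu⟩ := hsigns.2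
        exact ⟨u, by simpa using hu⟩
      · have hset : Finset.univ.filter (fun u => 0 < (-f) u)
            = Finset.univ.filter (fun u => f u < 0) := by
          refine Finset.filter_congr fun u _ => ?_
          simp [neg_pos]
        rw [hset]
        linarith [hmeas_sum]
  -- the positive part g of F
  set g : V → ℝ := fun u => max (F u) 0 with hg
  have hg0 : ∀ u, 0 ≤ g u := fun u => le_max_right _ _
  have hgF : ∀ u, F u ≤ g u := fun u => le_max_left _ _
  have hgin : ∀ u, 0 < F u → g u = F u := fun u hu => max_eq_left hu.le
  have hgout : ∀ u, ¬ 0 < F u → g u = 0 := fun u hu => max_eq_right (not_lt.1 hu)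
  set N : ℝ := ∑ u, π u * g u * g u with hN
  have hNpos : 0 < N := by
    obtain ⟨u, hu⟩ := hFex
    refine Finset.sum_pos' (fun u _ => mul_nonneg (mul_nonneg (hπ0 u).le (hg0 u)) (hg0 u))
      ⟨u, Finset.mem_univ u, ?_⟩
    rw [hgin u hu]
    exact mul_pos (mul_pos (hπ0 u) hu) hu
  -- Dirichlet form bound for g
  have key1 : ∑ u, π u * g u * g u - ∑ u, π u * (P *ᵥ g) u * g u ≤ (1 - lam1) * N := by
    have hpt : ∀ u, π u * g u * g u - π u * (P *ᵥ g) u * g u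
        ≤ (1 - lam1) * (π u * g u * g u) := by
      intro u
      by_cases hFu : 0 < F u
      · have hPg : lam1 * F u ≤ (P *ᵥ g) u := by
          have h1 : (P *ᵥ F) u ≤ (P *ᵥ g) u := by
            rw [mulVec_sum_apply, mulVec_sum_apply]
            exact Finset.sum_le_sum fun v _ =>
              mul_le_mul_of_nonneg_left (hgF v) (hP0 u v)
          have h2 : (P *ᵥ F) u = lam1 * F u := by rw [hFeig]; rfl
          linarith
        have h3 : (π u * F u) * (lam1 * F u) ≤ (π u * F u) * (P *ᵥ g) u :=
          mul_le_mul_of_nonneg_left hPg (mul_nonneg (hπ0 u).le hFu.le)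
        rw [hgin u hFu]
        nlinarith [h3]
      · rw [hgout u hFu]
        simp
    calc ∑ u, π u * g u * g u - ∑ u, π u * (P *ᵥ g) u * g u
        = ∑ u, (π u * g u * g u - π u * (P *ᵥ g) u * g u) := by
          rw [Finset.sum_sub_distrib]
      _ ≤ ∑ u, (1 - lam1) * (π u * g u * g u) := Finset.sum_le_sum fun u _ => hpt u
      _ = (1 - lam1) * N := by rw [← Finset.mul_sum, hN]
  set E2 : ℝ := ∑ u, ∑ v, π u * P u v * (g u - g v) ^ 2 with hE2
  have hE2nn : 0 ≤ E2 :=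
    Finset.sum_nonneg fun u _ => Finset.sum_nonneg fun v _ =>
      mul_nonneg (mul_nonneg (hπ0 u).le (hP0 u v)) (sq_nonneg _)
  have key1' : E2 ≤ 2 * (1 - lam1) * N := by
    have hdir := dirichlet_identity P π hP1 hrev g
    rw [← hE2] at hdir
    linarith [key1, hdir]
  have hlamnn : 0 ≤ 1 - lam1 := by nlinarith [hE2nn, key1', hNpos]
  -- Cauchy–Schwarz
  set D : ℝ := ∑ u, ∑ v, π u * P u v * |g u * g u - g v * g v| with hD
  set B : ℝ := ∑ u, ∑ v, π u * P u v * (g u + g v) ^ 2 with hB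
  have hCS : D ^ 2 ≤ E2 * B := by
    have := Finset.sum_mul_sq_le_sq_mul_sq Finset.univ
      (fun p : V × V => Real.sqrt (π p.1 * P p.1 p.2) * |g p.1 - g p.2|)
      (fun p : V × V => Real.sqrt (π p.1 * P p.1 p.2) * (g p.1 + g p.2))
    have e1 : ∑ p : V × V, (Real.sqrt (π p.1 * P p.1 p.2) * |g p.1 - g p.2|)
        * (Real.sqrt (π p.1 * P p.1 p.2) * (g p.1 + g p.2)) = D := by
      rw [Fintype.sum_prod_type, hD]
      refine Finset.sum_congr rfl fun u _ => Finset.sum_congr rfl fun v _ => ?_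
      show (Real.sqrt (π u * P u v) * |g u - g v|)
          * (Real.sqrt (π u * P u v) * (g u + g v)) = π u * P u v * |g u * g u - g v * g v|
      have hq : (0:ℝ) ≤ π u * P u v := mul_nonneg (hπ0 _).le (hP0 _ _)
      have habs : |g u - g v| * (g u + g v) = |g u * g u - g v * g v| := by
        rw [← abs_of_nonneg (add_nonneg (hg0 u) (hg0 v)), ← abs_mul]
        congr 1
        ring
      calc (Real.sqrt (π u * P u v) * |g u - g v|)
          * (Real.sqrt (π u * P u v) * (g u + g v))
          = (Real.sqrt (π u * P u v) * Real.sqrt (π u * P u v))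
            * (|g u - g v| * (g u + g v)) := by ring
        _ = π u * P u v * |g u * g u - g v * g v| := by
            rw [Real.mul_self_sqrt hq, habs]
    have e2 : ∑ p : V × V, (Real.sqrt (π p.1 * P p.1 p.2) * |g p.1 - g p.2|) ^ 2 = E2 := by
      rw [Fintype.sum_prod_type, hE2]
      refine Finset.sum_congr rfl fun u _ => Finset.sum_congr rfl fun v _ => ?_
      show (Real.sqrt (π u * P u v) * |g u - g v|) ^ 2 = π u * P u v * (g u - g v) ^ 2
      have hq : (0:ℝ) ≤ π u * P u v := mul_nonneg (hπ0 _).le (hP0 _ _)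
      rw [mul_pow, Real.sq_sqrt hq, sq_abs]
    have e3 : ∑ p : V × V, (Real.sqrt (π p.1 * P p.1 p.2) * (g p.1 + g p.2)) ^ 2 = B := by
      rw [Fintype.sum_prod_type, hB]
      refine Finset.sum_congr rfl fun u _ => Finset.sum_congr rfl fun v _ => ?_
      show (Real.sqrt (π u * P u v) * (g u + g v)) ^ 2 = π u * P u v * (g u + g v) ^ 2
      have hq : (0:ℝ) ≤ π u * P u v := mul_nonneg (hπ0 _).le (hP0 _ _)
      rw [mul_pow, Real.sq_sqrt hq]
    rw [e1, e2, e3] at this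
    exact this
  -- B ≤ 4 N
  have hrowN : ∑ u, ∑ v, π u * P u v * (g u * g u) = N := by
    rw [hN]
    refine Finset.sum_congr rfl fun u _ => ?_
    calc ∑ v, π u * P u v * (g u * g u) = ∑ v, P u v * (π u * (g u * g u)) := by
          exact Finset.sum_congr rfl fun v _ => by ring
      _ = (∑ v, P u v) * (π u * (g u * g u)) := by rw [Finset.sum_mul]
      _ = π u * g u * g u := by rw [hP1]; ring
  have hcolN : ∑ u, ∑ v, π u * P u v * (g v * g v) = N := by
    rw [hN, Finset.sum_comm]
    refine Finset.sum_congr rfl fun v _ => ?_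
    calc ∑ u, π u * P u v * (g v * g v) = (∑ u, π u * P u v) * (g v * g v) := by
          rw [Finset.sum_mul]
      _ = π v * g v * g v := by rw [col_sum P π hP1 hrev]; ring
  have hB4N : B ≤ 4 * N := by
    have hbd : B ≤ ∑ u, ∑ v, (2 * (π u * P u v * (g u * g u)) + 2 * (π u * P u v * (g v * g v))) := by
      rw [hB]
      refine Finset.sum_le_sum fun u _ => Finset.sum_le_sum fun v _ => ?_
      have hq : (0:ℝ) ≤ π u * P u v := mul_nonneg (hπ0 _).le (hP0 _ _)
      nlinarith [sq_nonneg (g u - g v), hq, mul_le_mul_of_nonneg_left (sq_nonneg (g u - g v)) hq]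
    calc B ≤ _ := hbd
      _ = 2 * (∑ u, ∑ v, π u * P u v * (g u * g u))
          + 2 * (∑ u, ∑ v, π u * P u v * (g v * g v)) := by
          simp only [Finset.sum_add_distrib, ← Finset.mul_sum]
      _ = 4 * N := by rw [hrowN, hcolN]; ring
  have hBnn : 0 ≤ B :=
    Finset.sum_nonneg fun u _ => Finset.sum_nonneg fun v _ =>
      mul_nonneg (mul_nonneg (hπ0 u).le (hP0 u v)) (sq_nonneg _)
  -- co-area bound
  have hφsupp : Finset.univ.filter (fun u => 0 < g u * g u)
      = Finset.univ.filter (fun u => 0 < F u) := by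
    refine Finset.filter_congr fun u _ => ?_
    constructor
    · intro hu
      by_contra hFu
      rw [hgout u hFu] at hu
      simpa using hu
    · intro hu
      rw [hgin u hu]
      positivity
  have hcoarea : 2 * h * ∑ u, π u * (g u * g u)
      ≤ ∑ u, ∑ v, π u * P u v * |g u * g u - g v * g v| := by
    refine coarea P π hP0 hπ0 hrev h hineq
      ((Finset.univ.filter (fun u => 0 < g u * g u)).card) (fun u => g u * g u) le_rfl
      (fun u => mul_nonneg (hg0 u) (hg0 u)) ?_
    rw [hφsupp]
    exact hFmeas
  have hNφ : ∑ u, π u * (g u * g u) = N := by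
    rw [hN]; exact Finset.sum_congr rfl fun u _ => by ring
  rw [hNφ] at hcoarea
  rw [← hD] at hcoarea
  -- part 1
  have hpart1 : h ^ 2 / 2 ≤ 1 - lam1 := by
    have h2hN : 0 ≤ 2 * h * N := by positivity
    have hsq : (2 * h * N) ^ 2 ≤ D ^ 2 := by
      exact pow_le_pow_left₀ h2hN hcoarea 2
    have hEB : E2 * B ≤ (2 * (1 - lam1) * N) * (4 * N) :=
      mul_le_mul key1' hB4N hBnn (by positivity)
    nlinarith [hsq, hCS, hEB, mul_pos hNpos hNpos]
  refine ⟨hpart1, Finset.univ.filter (fun u => 0 < F u), ?_, hFmeas⟩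
  obtain ⟨u, hu⟩ := hFex
  exact ⟨u, Finset.mem_filter.2 ⟨Finset.mem_univ u, hu⟩⟩

lemma easy_dir {V : Type*} [Fintype V] [DecidableEq V] [Nonempty V]
    (P : Matrix V V ℝ) (π : V → ℝ)
    (hP0 : ∀ u v, 0 ≤ P u v) (hP1 : ∀ u, ∑ v, P u v = 1)
    (hπ0 : ∀ u, 0 < π u) (hπ1 : ∑ u, π u = 1)
    (hrev : ∀ u v, π u * P u v = π v * P v u)
    (hirr : ∀ u v, ∃ t : ℕ, 0 < (P ^ t) u v)
    (lam1 : ℝ) (htop : ∀ μ ∈ spectrum ℝ P, μ ≠ 1 → μ ≤ lam1)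
    (hlamnn : 0 ≤ 1 - lam1)
    (S : Finset V) (hS1 : S.Nonempty) (hS2 : (∑ u ∈ S, π u) ≤ 1 / 2) :
    (1 - lam1) / 2 ≤ (∑ u ∈ S, ∑ v ∈ Sᶜ, π u * P u v) / ∑ u ∈ S, π u := by
  classical
  have hπSpos : 0 < ∑ u ∈ S, π u := Finset.sum_pos (fun u _ => hπ0 u) hS1
  set c : ℝ := ∑ u ∈ S, π u with hc
  have hcpos : 0 < c := hπSpos
  set t : V → ℝ := fun u => (if u ∈ S then (1:ℝ) else 0) - c with ht
  have hind : ∑ u, π u * (if u ∈ S then (1:ℝ) else 0) = c := by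
    rw [hc]
    calc ∑ u, π u * (if u ∈ S then (1:ℝ) else 0)
        = ∑ u, (if u ∈ S then π u else 0) := by
          exact Finset.sum_congr rfl fun u _ => by by_cases hu : u ∈ S <;> simp [hu]
      _ = ∑ u ∈ S, π u := by rw [Finset.sum_ite_mem, Finset.univ_inter]
  have horthS : ∑ u, π u * t u = 0 := by
    have : ∑ u, π u * t u = ∑ u, (π u * (if u ∈ S then (1:ℝ) else 0) - c * π u) := by
      refine Finset.sum_congr rfl fun u _ => ?_
      rw [ht]; ring
    rw [this, Finset.sum_sub_distrib, hind, ← Finset.mul_sum, hπ1, mul_one, sub_self]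
  have hvar := variational P π hP0 hP1 hπ0 hrev hirr lam1 htop t horthS
  have hdir := dirichlet_identity P π hP1 hrev t
  have htt : ∑ u, π u * t u * t u = c - c * c := by
    have hpt : ∀ u, π u * t u * t u
        = π u * (if u ∈ S then (1:ℝ) else 0) * (1 - 2 * c) + π u * (c * c) := by
      intro u
      rw [ht]
      by_cases hu : u ∈ S <;> simp [hu] <;> ring
    calc ∑ u, π u * t u * t u
        = ∑ u, (π u * (if u ∈ S then (1:ℝ) else 0) * (1 - 2 * c) + π u * (c * c)) :=
          Finset.sum_congr rfl fun u _ => hpt u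
      _ = (∑ u, π u * (if u ∈ S then (1:ℝ) else 0)) * (1 - 2 * c)
          + (∑ u, π u) * (c * c) := by
          rw [Finset.sum_add_distrib, ← Finset.sum_mul, ← Finset.sum_mul]
      _ = c - c * c := by rw [hind, hπ1]; ring
  have hEt : (1 / 2) * ∑ u, ∑ v, π u * P u v * (t u - t v) ^ 2
      = ∑ u ∈ S, ∑ v ∈ Sᶜ, π u * P u v := by
    have hsq : ∀ u v, (t u - t v) ^ 2
        = |(if u ∈ S then (1:ℝ) else 0) - (if v ∈ S then (1:ℝ) else 0)| := by
      intro u v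
      have hT : t u - t v = (if u ∈ S then (1:ℝ) else 0) - (if v ∈ S then (1:ℝ) else 0) := by
        rw [ht]; ring
      rw [hT]
      by_cases hu : u ∈ S <;> by_cases hv : v ∈ S <;> simp [hu, hv] <;> norm_num
    calc (1 / 2) * ∑ u, ∑ v, π u * P u v * (t u - t v) ^ 2
        = (1 / 2) * ∑ u, ∑ v, π u * P u v
            * |(if u ∈ S then (1:ℝ) else 0) - (if v ∈ S then (1:ℝ) else 0)| := by
          congr 1
          exact Finset.sum_congr rfl fun u _ => Finset.sum_congr rfl fun v _ => by
            rw [hsq u v]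
      _ = (1 / 2) * (2 * ∑ u ∈ S, ∑ v ∈ Sᶜ, π u * P u v) := by rw [cross_sum P π hrev S]
      _ = ∑ u ∈ S, ∑ v ∈ Sᶜ, π u * P u v := by ring
  -- (1 - lam1) * (c - c*c) ≤ Q
  have hmain : (1 - lam1) * (c - c * c) ≤ ∑ u ∈ S, ∑ v ∈ Sᶜ, π u * P u v := by
    have h1 : (1 - lam1) * (∑ u, π u * t u * t u)
        ≤ (1 / 2) * ∑ u, ∑ v, π u * P u v * (t u - t v) ^ 2 := by
      rw [hdir]
      nlinarith [hvar]
    calc (1 - lam1) * (c - c * c) = (1 - lam1) * ∑ u, π u * t u * t u := by rw [htt]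
      _ ≤ (1 / 2) * ∑ u, ∑ v, π u * P u v * (t u - t v) ^ 2 := h1
      _ = ∑ u ∈ S, ∑ v ∈ Sᶜ, π u * P u v := hEt
  have hc2 : 1 - c ≥ 1 / 2 := by linarith [hS2]
  rw [le_div_iff₀ hcpos]
  have haux : 0 ≤ (1 - lam1) * c * (1 - c - 1 / 2) :=
    mul_nonneg (mul_nonneg hlamnn hcpos.le) (by linarith)
  nlinarith [hmain, haux]

end CheegerProof


open CheegerProof Matrix in
/-- Cheeger (Jerrum–Sinclair) inequality: for a reversible irreducible Markov chain
`P` on a finite state space with stationary distribution `π`, second largest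
eigenvalue `λ₁`, and conductance `h = min {Q(S,Sᶜ)/π(S) : ∅ ≠ S, π(S) ≤ 1/2}`
with `Q(u,v) = π(u)P(u,v)`, one has `h²/2 ≤ 1 − λ₁ ≤ 2h`. -/
theorem cheeger_inequality {V : Type*} [Fintype V] [DecidableEq V] [Nonempty V]
    (P : Matrix V V ℝ) (π : V → ℝ)
    (hP0 : ∀ u v, 0 ≤ P u v) (hP1 : ∀ u, ∑ v, P u v = 1)
    (hπ0 : ∀ u, 0 < π u) (hπ1 : ∑ u, π u = 1)
    (hrev : ∀ u v, π u * P u v = π v * P v u)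
    (hirr : ∀ u v, ∃ t : ℕ, 0 < (P ^ t) u v)
    (lam1 : ℝ) (hmem : lam1 ∈ spectrum ℝ P) (hne : lam1 ≠ 1)
    (htop : ∀ μ ∈ spectrum ℝ P, μ ≠ 1 → μ ≤ lam1)
    (h : ℝ)
    (hh : h = sInf {x : ℝ | ∃ S : Finset V, S.Nonempty ∧ (∑ u ∈ S, π u) ≤ 1 / 2 ∧
        x = (∑ u ∈ S, ∑ v ∈ Sᶜ, π u * P u v) / ∑ u ∈ S, π u}) :
    h ^ 2 / 2 ≤ 1 - lam1 ∧ 1 - lam1 ≤ 2 * h := by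
  classical
  have hQnn : ∀ S : Finset V, 0 ≤ ∑ u ∈ S, ∑ v ∈ Sᶜ, π u * P u v :=
    fun S => Finset.sum_nonneg fun u _ => Finset.sum_nonneg fun v _ =>
      mul_nonneg (hπ0 u).le (hP0 u v)
  have hπSpos : ∀ S : Finset V, S.Nonempty → 0 < ∑ u ∈ S, π u :=
    fun S hS => Finset.sum_pos (fun u _ => hπ0 u) hS
  have hSETnn : ∀ x ∈ {x : ℝ | ∃ S : Finset V, S.Nonempty ∧ (∑ u ∈ S, π u) ≤ 1 / 2 ∧
      x = (∑ u ∈ S, ∑ v ∈ Sᶜ, π u * P u v) / ∑ u ∈ S, π u}, (0:ℝ) ≤ x := by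
    rintro x ⟨S, hS1, hS2, rfl⟩
    exact div_nonneg (hQnn S) (hπSpos S hS1).le
  have hbdd : BddBelow {x : ℝ | ∃ S : Finset V, S.Nonempty ∧ (∑ u ∈ S, π u) ≤ 1 / 2 ∧
      x = (∑ u ∈ S, ∑ v ∈ Sᶜ, π u * P u v) / ∑ u ∈ S, π u} :=
    ⟨0, fun x hx => hSETnn x hx⟩
  have hh0 : 0 ≤ h := by rw [hh]; exact Real.sInf_nonneg hSETnn
  have hineq : ∀ S : Finset V, S.Nonempty → (∑ u ∈ S, π u) ≤ 1 / 2 →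
      h * ∑ u ∈ S, π u ≤ ∑ u ∈ S, ∑ v ∈ Sᶜ, π u * P u v := by
    intro S hS1 hS2
    have hle : h ≤ (∑ u ∈ S, ∑ v ∈ Sᶜ, π u * P u v) / ∑ u ∈ S, π u := by
      rw [hh]; exact csInf_le hbdd ⟨S, hS1, hS2, rfl⟩
    exact (le_div_iff₀ (hπSpos S hS1)).1 hle
  obtain ⟨hpart1, S₀, hS₀1, hS₀2⟩ :=
    hard_dir P π hP0 hP1 hπ0 hπ1 hrev lam1 hmem hne h hh0 hineq
  refine ⟨hpart1, ?_⟩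
  have hlamnn : 0 ≤ 1 - lam1 := le_trans (by positivity) hpart1
  have hlow : (1 - lam1) / 2 ≤ h := by
    rw [hh]
    refine le_csInf ⟨_, S₀, hS₀1, hS₀2, rfl⟩ ?_
    rintro x ⟨S, hS1, hS2, rfl⟩
    exact easy_dir P π hP0 hP1 hπ0 hπ1 hrev hirr lam1 htop hlamnn S hS1 hS2
  linarith
end
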